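/- For the crystal structure on multisegments, ε_i(m) equals the number of minus signs remaining after applying the signature rule: list segments in crystal order, write − for each ⟨i,j⟩ and + for each ⟨i+2,j⟩, and repeatedly delete adjacent pairs +−. -/

import Mathlib

noncomputable section

/-- Validity of a segment `⟨i,j⟩` over `ℤ_odd`: both endpoints odd and `i ≤ j`. -/
def SegP (p : ℤ × ℤ) : Prop := Odd p.1 ∧ Odd p.2 ∧ p.1 ≤ p.2

instance : DecidablePred SegP := fun p => by unfold SegP; infer_instance

/-- A segment `⟨i,j⟩` over `ℤ_odd`. -/
def SegIdx : Type := {p : ℤ × ℤ // SegP p}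

instance : DecidableEq SegIdx := Subtype.instDecidableEq

/-- A multisegment. -/
abbrev MSeg := SegIdx →₀ ℕ

/-- The multiplicity `m_{ij}` of `⟨i,j⟩` in `m`. -/
def cnt (m : MSeg) (i j : ℤ) : ℕ := if h : SegP (i, j) then m ⟨(i, j), h⟩ else 0

/-- `A_k^{(i)}(m) = Σ_{k'≥k} (m_{i,k'} − m_{i+2,k'+2})`. -/
def Afun (i k : ℤ) (m : MSeg) : ℤ :=
  ∑ s ∈ m.support, ((if s.1.1 = i ∧ k ≤ s.1.2 then (m s : ℤ) else 0)
    - (if s.1.1 = i + 2 ∧ k + 2 ≤ s.1.2 then (m s : ℤ) else 0))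

/-- `ε_i(m) = max({A_k^{(i)}(m) | k ≥ i} ∪ {0})`. -/
def epsA (i : ℤ) (m : MSeg) : ℤ := sSup ({0} ∪ {z : ℤ | ∃ k, i ≤ k ∧ z = Afun i k m})

/-- Signs used in the signature rule. -/
inductive Sign where
  | plus : Sign
  | minus : Sign
deriving DecidableEq

/-- The signature word of `m` for color `i`: segments are listed in (decreasing) crystal
ordering, each segment `⟨i,j⟩` contributes a `−` and each segment `⟨i+2,j⟩` a `+`
(for equal `j`, `⟨i,j⟩ ≥_cry ⟨i+2,j⟩` comes first). -/
def sigList (i : ℤ) (m : MSeg) : List Sign :=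
  (((m.support.image fun s => s.1.2).sort (· ≤ ·)).reverse).flatMap fun j =>
    List.replicate (cnt m i j) Sign.minus ++ List.replicate (cnt m (i + 2) j) Sign.plus

/-- One step of the signature rule: delete an adjacent pair `+−`. -/
inductive SigStep : List Sign → List Sign → Prop where
  | cancel (a b : List Sign) :
      SigStep (a ++ [Sign.plus, Sign.minus] ++ b) (a ++ b)

/-- A word is reduced when no adjacent pair `+−` remains. -/
def SigReduced (L : List Sign) : Prop := ∀ a b : List Sign, L ≠ a ++ [Sign.plus, Sign.minus] ++ b

/-! ### Auxiliary material -/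

/-- The value of a sign: `−` counts `1`, `+` counts `-1`. -/
def sgnVal : Sign → ℤ
  | Sign.plus => -1
  | Sign.minus => 1

/-- Maximum over all prefixes of the (#− − #+) count. -/
def maxPre : List Sign → ℤ
  | [] => 0
  | x :: L => max 0 (sgnVal x + maxPre L)

lemma maxPre_nonneg (L : List Sign) : 0 ≤ maxPre L := by
  cases L <;> simp [maxPre]

lemma maxPre_minus_cons (L : List Sign) :
    maxPre (Sign.minus :: L) = 1 + maxPre L := by
  have := maxPre_nonneg L
  simp only [maxPre, sgnVal]; omega

lemma maxPre_cons (x : Sign) (L : List Sign) :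
    maxPre (x :: L) = max 0 (sgnVal x + maxPre L) := rfl

lemma maxPre_append_congr (a : List Sign) {X Y : List Sign} (h : maxPre X = maxPre Y) :
    maxPre (a ++ X) = maxPre (a ++ Y) := by
  induction a with
  | nil => simpa
  | cons x t ih => rw [List.cons_append, List.cons_append, maxPre_cons, maxPre_cons, ih]

lemma maxPre_pm (b : List Sign) :
    maxPre (Sign.plus :: Sign.minus :: b) = maxPre b := by
  have := maxPre_nonneg b
  simp only [maxPre, sgnVal]; omega

lemma maxPre_step {L M : List Sign} (h : SigStep L M) : maxPre L = maxPre M := by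
  cases h with
  | cancel a b =>
    have he : a ++ [Sign.plus, Sign.minus] ++ b = a ++ (Sign.plus :: Sign.minus :: b) := by
      simp
    rw [he]
    exact maxPre_append_congr a (maxPre_pm b)

lemma maxPre_rtg {L M : List Sign} (h : Relation.ReflTransGen SigStep L M) :
    maxPre L = maxPre M := by
  induction h with
  | refl => rfl
  | tail _ hstep ih => exact ih.trans (maxPre_step hstep)

lemma SigReduced.tail {x : Sign} {L : List Sign} (h : SigReduced (x :: L)) :
    SigReduced L := by
  intro a b hab
  exact h (x :: a) b (by simp [hab])

lemma no_minus_of_reduced_plus : ∀ L : List Sign, SigReduced (Sign.plus :: L) →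
    Sign.minus ∉ L := by
  intro L
  induction L with
  | nil => simp
  | cons y t ih =>
    intro hred hmem
    cases y with
    | minus => exact hred [] t rfl
    | plus =>
      have : Sign.minus ∈ t := by
        rcases List.mem_cons.1 hmem with h | h
        · exact absurd h (by simp)
        · exact h
      exact ih hred.tail this

lemma maxPre_of_no_minus : ∀ L : List Sign, Sign.minus ∉ L → maxPre L = 0 := by
  intro L
  induction L with
  | nil => intro _; rfl
  | cons x t ih =>
    intro h
    cases x with
    | minus => simp at h
    | plus =>
      have ht : maxPre t = 0 := ih (fun hm => h (List.mem_cons_of_mem _ hm))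
      simp [maxPre, sgnVal, ht]

lemma count_minus_of_reduced : ∀ L : List Sign, SigReduced L →
    (L.count Sign.minus : ℤ) = maxPre L := by
  intro L
  induction L with
  | nil => intro _; rfl
  | cons x t ih =>
    intro hred
    cases x with
    | minus =>
      rw [maxPre_minus_cons]
      rw [List.count_cons_self]
      push_cast
      rw [ih hred.tail]; ring
    | plus =>
      have hnm : Sign.minus ∉ t := no_minus_of_reduced_plus t hred
      have h1 : t.count Sign.minus = 0 := List.count_eq_zero.2 hnm
      have h2 : maxPre t = 0 := maxPre_of_no_minus t hnm
      rw [List.count_cons_of_ne (by simp)]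
      simp [maxPre, sgnVal, h1, h2]

lemma maxPre_replicate_minus (n : ℕ) (X : List Sign) :
    maxPre (List.replicate n Sign.minus ++ X) = n + maxPre X := by
  induction n with
  | zero => simp
  | succ k ih =>
    rw [List.replicate_succ, List.cons_append, maxPre_minus_cons, ih]
    push_cast; ring

lemma maxPre_replicate_plus (n : ℕ) (X : List Sign) :
    maxPre (List.replicate n Sign.plus ++ X) = max 0 (maxPre X - n) := by
  induction n with
  | zero =>
    have := maxPre_nonneg X
    simp only [List.replicate_zero, List.nil_append, Nat.cast_zero, sub_zero]
    omega
  | succ k ih =>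
    rw [List.replicate_succ, List.cons_append]
    simp only [maxPre, sgnVal, ih]
    push_cast; omega

/-- Recursive description of `maxPre` of a signature word. -/
def gfun (a b : ℤ → ℕ) : List ℤ → ℤ
  | [] => 0
  | j :: t => a j + max 0 (gfun a b t - b j)

lemma gfun_nonneg (a b : ℤ → ℕ) (js : List ℤ) : 0 ≤ gfun a b js := by
  cases js with
  | nil => exact le_refl 0
  | cons j t => simp only [gfun]; positivity

lemma maxPre_flatMap (a b : ℤ → ℕ) (js : List ℤ) :
    maxPre (js.flatMap fun j =>
      List.replicate (a j) Sign.minus ++ List.replicate (b j) Sign.plus) =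
      gfun a b js := by
  induction js with
  | nil => rfl
  | cons j t ih =>
    rw [List.flatMap_cons, List.append_assoc, maxPre_replicate_minus,
      maxPre_replicate_plus, ih, gfun]

/-- The partial alternating sum corresponding to a cut at level `k`. -/
def Asum (a b : ℤ → ℕ) (js : List ℤ) (k : ℤ) : ℤ :=
  ((js.filter (fun j => k ≤ j)).map (fun j => (a j : ℤ))).sum
  - ((js.filter (fun j => k + 2 ≤ j)).map (fun j => (b j : ℤ))).sum

lemma Asum_cons_both (a b : ℤ → ℕ) (j k : ℤ) (t : List ℤ) (h1 : k ≤ j) (h2 : k + 2 ≤ j) :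
    Asum a b (j :: t) k = (a j : ℤ) - b j + Asum a b t k := by
  unfold Asum
  rw [List.filter_cons_of_pos (by simpa using h1), List.filter_cons_of_pos (by simpa using h2)]
  simp only [List.map_cons, List.sum_cons]
  ring

lemma Asum_cons_mid (a b : ℤ → ℕ) (j k : ℤ) (t : List ℤ) (h1 : k ≤ j) (h2 : ¬ k + 2 ≤ j)
    (ht : ∀ y ∈ t, y + 2 ≤ j) :
    Asum a b (j :: t) k = (a j : ℤ) := by
  unfold Asum
  rw [List.filter_cons_of_pos (by simpa using h1), List.filter_cons_of_neg (by simpa using h2)]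
  have hf1 : t.filter (fun y => decide (k ≤ y)) = [] := by
    rw [List.filter_eq_nil_iff]
    intro y hy
    have := ht y hy
    simp only [decide_eq_true_eq]
    omega
  have hf2 : t.filter (fun y => decide (k + 2 ≤ y)) = [] := by
    rw [List.filter_eq_nil_iff]
    intro y hy
    have := ht y hy
    simp only [decide_eq_true_eq]
    omega
  rw [hf1, hf2]
  simp

lemma Asum_cons_none (a b : ℤ → ℕ) (j k : ℤ) (t : List ℤ) (h1 : ¬ k ≤ j)
    (ht : ∀ y ∈ t, y + 2 ≤ j) :
    Asum a b (j :: t) k = 0 := by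
  unfold Asum
  rw [List.filter_cons_of_neg (by simpa using h1),
    List.filter_cons_of_neg (by simp only [decide_eq_true_eq]; omega)]
  have hf1 : t.filter (fun y => decide (k ≤ y)) = [] := by
    rw [List.filter_eq_nil_iff]
    intro y hy
    have := ht y hy
    simp only [decide_eq_true_eq]
    omega
  have hf2 : t.filter (fun y => decide (k + 2 ≤ y)) = [] := by
    rw [List.filter_eq_nil_iff]
    intro y hy
    have := ht y hy
    simp only [decide_eq_true_eq]
    omega
  rw [hf1, hf2]
  simp

lemma Asum_le_gfun (a b : ℤ → ℕ) (js : List ℤ)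
    (hpw : js.Pairwise (fun x y => y + 2 ≤ x)) (k : ℤ) :
    Asum a b js k ≤ gfun a b js := by
  induction js with
  | nil => simp [Asum, gfun]
  | cons j t ih =>
    rw [List.pairwise_cons] at hpw
    obtain ⟨hj, hpt⟩ := hpw
    have iht := ih hpt
    by_cases hk : k ≤ j
    · by_cases hk2 : k + 2 ≤ j
      · rw [Asum_cons_both a b j k t hk hk2, gfun]
        have h1 : gfun a b t - (b j : ℤ) ≤ max 0 (gfun a b t - b j) := le_max_right _ _
        linarith
      · rw [Asum_cons_mid a b j k t hk hk2 hj, gfun]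
        have : (0:ℤ) ≤ max 0 (gfun a b t - b j) := le_max_left _ _
        linarith
    · rw [Asum_cons_none a b j k t hk hj]
      exact gfun_nonneg a b _

lemma gfun_attained (a b : ℤ → ℕ) (js : List ℤ)
    (hpw : js.Pairwise (fun x y => y + 2 ≤ x)) :
    gfun a b js = 0 ∨ ∃ k ∈ js, a k ≠ 0 ∧ gfun a b js = Asum a b js k := by
  induction js with
  | nil => exact Or.inl rfl
  | cons j t ih =>
    rw [List.pairwise_cons] at hpw
    obtain ⟨hj, hpt⟩ := hpw
    by_cases hG : gfun a b t ≤ (b j : ℤ)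
    · have hgf : gfun a b (j :: t) = a j := by
        rw [gfun]
        have : max 0 (gfun a b t - (b j : ℤ)) = 0 := by
          have := gfun_nonneg a b t; omega
        rw [this]; ring
      by_cases ha : a j = 0
      · exact Or.inl (by rw [hgf, ha]; rfl)
      · refine Or.inr ⟨j, List.mem_cons_self, ha, ?_⟩
        rw [hgf, Asum_cons_mid a b j j t le_rfl (by omega) hj]
    · push_neg at hG
      have hGpos : 0 < gfun a b t := lt_of_le_of_lt (by positivity) hG
      rcases ih hpt with h0 | ⟨k, hkmem, hak, hAs⟩
      · omega
      · refine Or.inr ⟨k, List.mem_cons_of_mem _ hkmem, hak, ?_⟩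
        have hk2 : k + 2 ≤ j := hj k hkmem
        have hgf : gfun a b (j :: t) = (a j : ℤ) - b j + gfun a b t := by
          rw [gfun]
          have : max 0 (gfun a b t - (b j : ℤ)) = gfun a b t - b j := by omega
          rw [this]; ring
        rw [hgf, Asum_cons_both a b j k t (by omega) hk2, hAs]

/-! ### Relating `Afun` to sums over the levels -/

lemma cnt_eq_sum (m : MSeg) (c j : ℤ) :
    (cnt m c j : ℤ) = ∑ s ∈ m.support, if s.1 = (c, j) then (m s : ℤ) else 0 := by
  by_cases h : SegP (c, j)
  · have : ∀ s : SegIdx, s.1 = (c, j) ↔ s = ⟨(c, j), h⟩ := by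
      intro s; constructor
      · intro hs; exact Subtype.ext hs
      · intro hs; rw [hs]
    rw [cnt, dif_pos h]
    symm
    refine (Finset.sum_eq_single (⟨(c, j), h⟩ : SegIdx) ?_ ?_).trans ?_
    · intro b _ hb
      rw [if_neg]
      intro e; exact hb ((this b).1 e)
    · intro hn
      rw [if_pos rfl]
      have := Finsupp.notMem_support_iff.1 hn
      exact_mod_cast this
    · rw [if_pos rfl]
  · rw [cnt, dif_neg h]
    rw [Finset.sum_eq_zero]
    · rfl
    · intro s _
      rw [if_neg]
      intro hs
      exact h (hs ▸ s.2)

lemma sum_if_eq_levels (m : MSeg) (c k : ℤ) :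
    (∑ s ∈ m.support, if s.1.1 = c ∧ k ≤ s.1.2 then (m s : ℤ) else 0)
      = ∑ j ∈ m.support.image (fun s => s.1.2), if k ≤ j then (cnt m c j : ℤ) else 0 := by
  have hrw : ∀ j, (if k ≤ j then (cnt m c j : ℤ) else 0)
      = ∑ s ∈ m.support, if k ≤ j ∧ s.1 = (c, j) then (m s : ℤ) else 0 := by
    intro j
    by_cases hkj : k ≤ j
    · rw [if_pos hkj, cnt_eq_sum]
      exact Finset.sum_congr rfl fun s _ => by simp [hkj]
    · rw [if_neg hkj, eq_comm]
      exact Finset.sum_eq_zero fun s _ => by simp [hkj]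
  rw [Finset.sum_congr rfl fun j _ => hrw j, Finset.sum_comm]
  refine Finset.sum_congr rfl fun s hs => ?_
  have hmem : s.1.2 ∈ m.support.image (fun s => s.1.2) :=
    Finset.mem_image_of_mem _ hs
  have hrw2 : ∀ j, (if k ≤ j ∧ s.1 = (c, j) then (m s : ℤ) else 0)
      = if j = s.1.2 then (if s.1.1 = c ∧ k ≤ s.1.2 then (m s : ℤ) else 0) else 0 := by
    intro j
    by_cases hj : j = s.1.2
    · subst hj
      by_cases hc : s.1.1 = c ∧ k ≤ s.1.2
      · rw [if_pos ⟨hc.2, by rw [← hc.1]⟩, if_pos rfl, if_pos hc]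
      · rw [if_pos rfl, if_neg hc, if_neg]
        intro ⟨h1, h2⟩
        exact hc ⟨by rw [h2], h1⟩
    · rw [if_neg, if_neg hj]
      intro ⟨_, h2⟩
      exact hj (by rw [h2])
  rw [Finset.sum_congr rfl fun j _ => hrw2 j]
  rw [Finset.sum_ite_eq' (m.support.image fun s => s.1.2) s.1.2
    (fun _ => if s.1.1 = c ∧ k ≤ s.1.2 then (m s : ℤ) else 0)]
  rw [if_pos hmem]

lemma sum_map_filter_le (l : List ℤ) (g : ℤ → ℤ) (k : ℤ) :
    ((l.filter (fun j => k ≤ j)).map g).sum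
      = (l.map (fun j => if k ≤ j then g j else 0)).sum := by
  induction l with
  | nil => rfl
  | cons x t ih =>
    by_cases h : k ≤ x
    · rw [List.filter_cons_of_pos (by simpa using h)]
      simp only [List.map_cons, List.sum_cons, ih, if_pos h]
    · rw [List.filter_cons_of_neg (by simpa using h)]
      simp only [List.map_cons, List.sum_cons, ih, if_neg h]
      ring

lemma sum_over_rev_sort (J : Finset ℤ) (g : ℤ → ℤ) :
    (((J.sort (· ≤ ·)).reverse).map g).sum = ∑ j ∈ J, g j := by
  rw [List.map_reverse, List.sum_reverse]
  exact (((Finset.sort_perm_toList J (· ≤ ·)).map g).sum_eq).trans (Finset.sum_map_toList J g)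

/-- `ε_i(m)` equals the number of `−` signs remaining after applying the
signature rule to the signature word of `m`. -/
theorem eps_eq_signature_rule (i : ℤ) (hodd : Odd i) (m : MSeg) (L : List Sign)
    (hred : Relation.ReflTransGen SigStep (sigList i m) L) (hfin : SigReduced L) :
    (L.count Sign.minus : ℤ) = epsA i m := by
  classical
  set J : Finset ℤ := m.support.image fun s => s.1.2 with hJ
  set js : List ℤ := (J.sort (· ≤ ·)).reverse with hjs
  set a : ℤ → ℕ := fun j => cnt m i j with ha
  set b : ℤ → ℕ := fun j => cnt m (i + 2) j with hb
  have hoddJ : ∀ j ∈ J, Odd j := by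
    intro j hj
    obtain ⟨s, _, rfl⟩ := Finset.mem_image.1 hj
    exact s.2.2.1
  have hpw : js.Pairwise (fun x y => y + 2 ≤ x) := by
    rw [hjs, List.pairwise_reverse]
    refine List.Pairwise.imp_of_mem ?_ (Finset.sortedLT_sort J).pairwise
    intro x y hx hy hxy
    obtain ⟨p, rfl⟩ := hoddJ x ((Finset.mem_sort _).1 hx)
    obtain ⟨q, rfl⟩ := hoddJ y ((Finset.mem_sort _).1 hy)
    omega
  have hsig : maxPre (sigList i m) = gfun a b js := by
    rw [sigList, ← hJ, ← hjs]
    exact maxPre_flatMap a b js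
  have hAfun : ∀ k, Afun i k m = Asum a b js k := by
    intro k
    have h1 := sum_if_eq_levels m i k
    have h2 := sum_if_eq_levels m (i + 2) (k + 2)
    rw [Afun, Finset.sum_sub_distrib, h1, h2, Asum,
      sum_map_filter_le, sum_map_filter_le, hjs, sum_over_rev_sort, sum_over_rev_sort]
  have hcount : (L.count Sign.minus : ℤ) = gfun a b js := by
    rw [count_minus_of_reduced L hfin, ← maxPre_rtg hred, hsig]
  rw [hcount, epsA]
  symm
  apply IsGreatest.csSup_eq
  constructor
  · rcases gfun_attained a b js hpw with h0 | ⟨k, _, hak, hAs⟩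
    · rw [h0]; exact Or.inl rfl
    · right
      refine ⟨k, ?_, by rw [hAfun k, ← hAs]⟩
      have hseg : SegP (i, k) := by
        by_contra h
        exact hak (by simp [ha, cnt, h])
      exact hseg.2.2
  · rintro z (hz | ⟨k, _, rfl⟩)
    · rw [Set.mem_singleton_iff] at hz
      rw [hz]
      exact gfun_nonneg a b js
    · rw [hAfun k]
      exact Asum_le_gfun a b js hpw k
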